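/- Let K = Matrix.fromBlocks A B C D with A : Matrix (Fin n) (Fin n) ℂ, D : Matrix (Fin m) (Fin m) ℂ, B : Matrix (Fin n) (Fin m) ℂ, C : Matrix (Fin m) (Fin n) ℂ, where n, m ≥ 1, and suppose A and D are normal (IsStarNormal, i.e., Aᴴ*A = A*Aᴴ and Dᴴ*D = D*Dᴴ). Then every eigenvalue λ ∈ spectrum ℂ K satisfies Metric.infDist λ (spectrum ℂ A) · Metric.infDist λ (spectrum ℂ D) ≤ ‖B‖ · ‖C‖, where ‖·‖ is the ℓ²-operator norm. (Block Gershgorin / Feingold–Varga inclusion for normal diagonal blocks, using that for a normal matrix M the resolvent norm satisfies ‖(λ−M)⁻¹‖ = 1/dist(λ, spectrum M).) -/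

import Mathlib

/-- The ℓ²-operator norm of a (rectangular) complex matrix: the operator norm of
the induced linear map between Euclidean spaces. -/
noncomputable def l2OpNorm {m n : Type*} [Fintype m] [Fintype n] [DecidableEq n]
    (M : Matrix m n ℂ) : ℝ :=
  ‖LinearMap.toContinuousLinearMap (Matrix.toEuclideanLin M)‖

open scoped Matrix.Norms.L2Operator
open Matrix

/-- For a normal matrix `M` and any `lam : ℂ`, the operator `lam • 1 - M` expands norms by at
least the distance from `lam` to the spectrum of `M`. -/
lemma normal_resolvent_lower_bound {k : ℕ} (M : Matrix (Fin k) (Fin k) ℂ)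
    (hM : IsStarNormal M) (lam : ℂ) (v : EuclideanSpace ℂ (Fin k)) :
    Metric.infDist lam (spectrum ℂ M) * ‖v‖ ≤
      ‖Matrix.toEuclideanLin (algebraMap ℂ (Matrix (Fin k) (Fin k) ℂ) lam - M) v‖ := by
  letI : CStarAlgebra (Matrix (Fin k) (Fin k) ℂ) := {}
  set N : Matrix (Fin k) (Fin k) ℂ := algebraMap ℂ _ lam - M with hNdef
  set d : ℝ := Metric.infDist lam (spectrum ℂ M) with hd
  have hd0 : 0 ≤ d := Metric.infDist_nonneg
  rcases eq_or_lt_of_le hd0 with h0 | hdpos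
  · rw [← h0, zero_mul]; exact norm_nonneg _
  have hlam : lam ∉ spectrum ℂ M := fun hmem => by
    rw [hd, Metric.infDist_zero_of_mem hmem] at hdpos; exact lt_irrefl _ hdpos
  have hU : IsUnit N := by
    rw [spectrum.mem_iff, not_not] at hlam; exact hlam
  have hNnormal : IsStarNormal N := by
    constructor
    rw [hNdef, star_sub, ← algebraMap_star_comm]
    exact (Algebra.commute_algebraMap_left _ _).sub_left
      ((Algebra.commute_algebraMap_right _ _).sub_right hM.star_comm_self)
  set Ninv : Matrix (Fin k) (Fin k) ℂ := ↑hU.unit⁻¹ with hNinvdef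
  have hNinvNormal : IsStarNormal Ninv := by
    constructor
    have hc : Commute (star N) N := hNnormal.star_comm_self
    have h2 : Commute (star (↑hU.unit : Matrix (Fin k) (Fin k) ℂ)) ↑hU.unit⁻¹ := by
      rw [hU.unit_spec]; exact hc.units_inv_right
    rw [← Units.coe_star] at h2
    have h3 := h2.units_inv_left
    rwa [Units.coe_star_inv] at h3
  have hbound : ∀ μ ∈ spectrum ℂ Ninv, ‖μ‖ ≤ d⁻¹ := by
    intro μ hμ
    have hμ0 : μ ≠ 0 := by
      intro h0'
      rw [h0', spectrum.zero_mem_iff] at hμ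
      exact hμ hU.unit⁻¹.isUnit
    have hμinv : μ⁻¹ ∈ spectrum ℂ (↑hU.unit : Matrix (Fin k) (Fin k) ℂ) := by
      have := (spectrum.inv_mem_iff (r := Units.mk0 μ hμ0) (a := hU.unit⁻¹)).mp hμ
      simpa using this
    rw [hU.unit_spec, ← spectrum.singleton_sub_eq] at hμinv
    obtain ⟨a, ha, z, hz, hzz⟩ := Set.mem_sub.mp hμinv
    rw [Set.mem_singleton_iff] at ha
    subst ha
    have hdist : d ≤ ‖μ⁻¹‖ := by
      have h' : d ≤ dist a z := Metric.infDist_le_dist_of_mem hz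
      rw [dist_eq_norm] at h'
      rw [← hzz]; exact h'
    rw [norm_inv] at hdist
    calc ‖μ‖ = (‖μ‖⁻¹)⁻¹ := (inv_inv _).symm
      _ ≤ d⁻¹ := inv_anti₀ hdpos hdist
  have hNinvNorm : ‖Ninv‖ ≤ d⁻¹ := by
    have hsr := IsStarNormal.spectralRadius_eq_nnnorm Ninv
    have hc : spectralRadius ℂ Ninv ≤ ENNReal.ofReal d⁻¹ := by
      rw [spectralRadius]
      refine iSup₂_le fun μ hμ => ?_
      rw [show (‖μ‖₊ : ENNReal) = ENNReal.ofReal ‖μ‖ from (ofReal_norm μ).symm]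
      exact ENNReal.ofReal_le_ofReal (hbound μ hμ)
    rw [hsr] at hc
    have := ENNReal.toReal_mono ENNReal.ofReal_ne_top hc
    simpa [ENNReal.toReal_ofReal (inv_nonneg.2 hd0)] using this
  have hmul : Ninv * N = 1 := by
    have h₁ := hU.val_inv_mul
    exact h₁
  have hid : Matrix.toEuclideanCLM (𝕜 := ℂ) Ninv (Matrix.toEuclideanCLM (𝕜 := ℂ) N v) = v := by
    rw [← ContinuousLinearMap.comp_apply, ← ContinuousLinearMap.mul_def, ← _root_.map_mul, hmul,
      _root_.map_one, ContinuousLinearMap.one_apply]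
  have hle : ‖v‖ ≤ d⁻¹ * ‖Matrix.toEuclideanCLM (𝕜 := ℂ) N v‖ := by
    calc ‖v‖ = ‖Matrix.toEuclideanCLM (𝕜 := ℂ) Ninv (Matrix.toEuclideanCLM (𝕜 := ℂ) N v)‖ := by
          rw [hid]
      _ ≤ ‖Matrix.toEuclideanCLM (𝕜 := ℂ) Ninv‖ * ‖Matrix.toEuclideanCLM (𝕜 := ℂ) N v‖ :=
          ContinuousLinearMap.le_opNorm _ _
      _ ≤ d⁻¹ * ‖Matrix.toEuclideanCLM (𝕜 := ℂ) N v‖ := by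
          apply mul_le_mul_of_nonneg_right _ (norm_nonneg _)
          rw [← Matrix.cstar_norm_def]; exact hNinvNorm
  have heq : Matrix.toEuclideanCLM (𝕜 := ℂ) N v = Matrix.toEuclideanLin N v :=
    DFunLike.congr_fun (Matrix.coe_toEuclideanCLM_eq_toEuclideanLin N) v
  rw [heq] at hle
  calc d * ‖v‖ ≤ d * (d⁻¹ * ‖Matrix.toEuclideanLin N v‖) :=
        mul_le_mul_of_nonneg_left hle hd0
    _ = ‖Matrix.toEuclideanLin N v‖ := by
        rw [← mul_assoc, mul_inv_cancel₀ (ne_of_gt hdpos), one_mul]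

set_option maxHeartbeats 1600000 in
/-- **Block Gershgorin / Feingold–Varga inclusion for normal diagonal blocks.**
If `A` and `D` are normal, then every eigenvalue `λ` of `K = fromBlocks A B C D`
satisfies `dist(λ, spec A) · dist(λ, spec D) ≤ ‖B‖·‖C‖` in the ℓ²-operator norm. -/
theorem feingold_varga_normal_blocks {n m : ℕ} (hn : 1 ≤ n) (hm : 1 ≤ m)
    (A : Matrix (Fin n) (Fin n) ℂ) (B : Matrix (Fin n) (Fin m) ℂ)
    (C : Matrix (Fin m) (Fin n) ℂ) (D : Matrix (Fin m) (Fin m) ℂ)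
    (hA : IsStarNormal A) (hD : IsStarNormal D)
    (lam : ℂ) (hK : lam ∈ spectrum ℂ (Matrix.fromBlocks A B C D)) :
    Metric.infDist lam (spectrum ℂ A) * Metric.infDist lam (spectrum ℂ D) ≤
      l2OpNorm B * l2OpNorm C := by
  classical
  -- extract an eigenvector
  have h1 : Module.End.HasEigenvalue (Matrix.toLinAlgEquiv' (Matrix.fromBlocks A B C D)) lam := by
    rw [Module.End.hasEigenvalue_iff_mem_spectrum, AlgEquiv.spectrum_eq]
    exact hK
  obtain ⟨v, hv⟩ := h1.exists_hasEigenvector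
  have hv0 : v ≠ 0 := hv.right
  have hvK : (Matrix.fromBlocks A B C D) *ᵥ v = lam • v := by
    have h2 := hv.apply_eq_smul
    rwa [Matrix.toLinAlgEquiv'_apply] at h2
  set x0 : Fin n → ℂ := v ∘ Sum.inl with hx0def
  set y0 : Fin m → ℂ := v ∘ Sum.inr with hy0def
  rw [Matrix.fromBlocks_mulVec] at hvK
  have hx : A *ᵥ x0 + B *ᵥ y0 = lam • x0 := funext fun i => by
    have h3 := congrFun hvK (Sum.inl i); simpa [hx0def, hy0def] using h3
  have hy : C *ᵥ x0 + D *ᵥ y0 = lam • y0 := funext fun i => by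
    have h3 := congrFun hvK (Sum.inr i); simpa [hx0def, hy0def] using h3
  set x : EuclideanSpace ℂ (Fin n) := (WithLp.equiv 2 _).symm x0 with hxdef
  set y : EuclideanSpace ℂ (Fin m) := (WithLp.equiv 2 _).symm y0 with hydef
  set dA : ℝ := Metric.infDist lam (spectrum ℂ A)
  set dD : ℝ := Metric.infDist lam (spectrum ℂ D)
  have hBnn : 0 ≤ l2OpNorm B := norm_nonneg _
  have hCnn : 0 ≤ l2OpNorm C := norm_nonneg _
  -- the two basic inequalities
  have hEA : Matrix.toEuclideanLin (algebraMap ℂ (Matrix (Fin n) (Fin n) ℂ) lam - A) x =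
      Matrix.toEuclideanLin B y := by
    rw [Matrix.toEuclideanLin_apply, Matrix.toEuclideanLin_apply]
    congr 1
    rw [hxdef, hydef]
    simp only [Equiv.apply_symm_apply, WithLp.equiv_symm_apply, WithLp.ofLp_toLp]
    rw [Matrix.sub_mulVec, Algebra.algebraMap_eq_smul_one, Matrix.smul_mulVec,
      Matrix.one_mulVec, ← hx]
    abel
  have hED : Matrix.toEuclideanLin (algebraMap ℂ (Matrix (Fin m) (Fin m) ℂ) lam - D) y =
      Matrix.toEuclideanLin C x := by
    rw [Matrix.toEuclideanLin_apply, Matrix.toEuclideanLin_apply]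
    congr 1
    rw [hxdef, hydef]
    simp only [Equiv.apply_symm_apply, WithLp.equiv_symm_apply, WithLp.ofLp_toLp]
    rw [Matrix.sub_mulVec, Algebra.algebraMap_eq_smul_one, Matrix.smul_mulVec,
      Matrix.one_mulVec, ← hy]
    abel
  have hBy : ‖Matrix.toEuclideanLin B y‖ ≤ l2OpNorm B * ‖y‖ :=
    (LinearMap.toContinuousLinearMap (Matrix.toEuclideanLin B)).le_opNorm y
  have hCx : ‖Matrix.toEuclideanLin C x‖ ≤ l2OpNorm C * ‖x‖ :=
    (LinearMap.toContinuousLinearMap (Matrix.toEuclideanLin C)).le_opNorm x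
  have ha : dA * ‖x‖ ≤ l2OpNorm B * ‖y‖ := by
    refine le_trans ?_ hBy
    rw [← hEA]
    exact normal_resolvent_lower_bound A hA lam x
  have hb : dD * ‖y‖ ≤ l2OpNorm C * ‖x‖ := by
    refine le_trans ?_ hCx
    rw [← hED]
    exact normal_resolvent_lower_bound D hD lam y
  have hdA0 : 0 ≤ dA := Metric.infDist_nonneg
  have hdD0 : 0 ≤ dD := Metric.infDist_nonneg
  -- case analysis on vanishing of the two blocks
  rcases eq_or_lt_of_le (norm_nonneg x) with hx0 | hxpos
  · rcases eq_or_lt_of_le (norm_nonneg y) with hy0 | hypos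
    · exfalso
      apply hv0
      have hx00 : x0 = 0 := by
        have : x = 0 := by rwa [eq_comm, norm_eq_zero] at hx0
        simpa [hxdef] using congrArg (WithLp.equiv 2 _) this
      have hy00 : y0 = 0 := by
        have : y = 0 := by rwa [eq_comm, norm_eq_zero] at hy0
        simpa [hydef] using congrArg (WithLp.equiv 2 _) this
      funext s
      cases s with
      | inl i => exact congrFun hx00 i
      | inr i => exact congrFun hy00 i
    · -- x = 0, y ≠ 0 : dD = 0
      have : dD * ‖y‖ ≤ 0 := by
        refine le_trans hb ?_
        rw [← hx0, mul_zero]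
      have hdD : dD = 0 := by nlinarith
      rw [hdD, mul_zero]
      exact mul_nonneg hBnn hCnn
  · rcases eq_or_lt_of_le (norm_nonneg y) with hy0 | hypos
    · -- y = 0, x ≠ 0 : dA = 0
      have : dA * ‖x‖ ≤ 0 := by
        refine le_trans ha ?_
        rw [← hy0, mul_zero]
      have hdA : dA = 0 := by nlinarith
      rw [hdA, zero_mul]
      exact mul_nonneg hBnn hCnn
    · -- both nonzero
      have hprod := mul_le_mul ha hb (mul_nonneg hdD0 (norm_nonneg _))
        (mul_nonneg hBnn (norm_nonneg _))
      have h2 : (dA * dD) * (‖x‖ * ‖y‖) ≤ (l2OpNorm B * l2OpNorm C) * (‖x‖ * ‖y‖) := by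
        linear_combination hprod
      exact le_of_mul_le_mul_right h2 (mul_pos hxpos hypos)
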